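/- arXiv:2106.06254 — 4 statements merged into one kernel-verified Lean document; each statement's English description precedes it below -/
import Mathlib

section
/- Let M, N, P be h-sets in ℝ² and f, g : ℝ² → ℝ² continuous maps such that M f-covers N and N g-covers P, in the sense of covering relations. Then there exists a point z in the interior of M (relative to the h-set structure, i.e., z ∈ c_M⁻¹((-1,1)²)) such that f(z) lies in c_N⁻¹((-1,1)²) and g(f(z)) ∈ P. -/
/-- The closed unit square `[-1,1]²`. -/
def unitSquare : Set (ℝ × ℝ) := Set.Icc (-1 : ℝ) 1 ×ˢ Set.Icc (-1 : ℝ) 1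

/-- The open unit square `(-1,1)²`. -/
def openSquare : Set (ℝ × ℝ) := Set.Ioo (-1 : ℝ) 1 ×ˢ Set.Ioo (-1 : ℝ) 1

/-- Covering relation `M ⟹f N` expressed through the homeomorphisms `cM, cN`
of the h-sets: with `f_c = cN ∘ f ∘ cM⁻¹`, the left/right edges of the square
are mapped beyond `x = ∓1` (exit condition, in one of the two orientations),
and the image of the square misses `[-1,1] × (ℝ \ (-1,1))` (entry condition). -/
def Covers (cM cN : ℝ × ℝ ≃ₜ ℝ × ℝ) (f : ℝ × ℝ → ℝ × ℝ) : Prop :=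
  (((∀ y ∈ Set.Icc (-1 : ℝ) 1, (cN (f (cM.symm (-1, y)))).1 < -1) ∧
    (∀ y ∈ Set.Icc (-1 : ℝ) 1, 1 < (cN (f (cM.symm (1, y)))).1)) ∨
   ((∀ y ∈ Set.Icc (-1 : ℝ) 1, (cN (f (cM.symm (1, y)))).1 < -1) ∧
    (∀ y ∈ Set.Icc (-1 : ℝ) 1, 1 < (cN (f (cM.symm (-1, y)))).1))) ∧
  (∀ p ∈ unitSquare, cN (f (cM.symm p)) ∉ Set.Icc (-1 : ℝ) 1 ×ˢ (Set.Ioo (-1 : ℝ) 1)ᶜ)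

/-- if `M ⟹f N` and `N ⟹g P`, then there is a point `z` in the
interior of `M` with `f(z)` in the interior of `N` and `g(f(z)) ∈ P`. -/
theorem covering_composition
    (M N P : Set (ℝ × ℝ)) (cM cN cP : ℝ × ℝ ≃ₜ ℝ × ℝ)
    (hM : cM '' M = unitSquare) (hN : cN '' N = unitSquare) (hP : cP '' P = unitSquare)
    (f g : ℝ × ℝ → ℝ × ℝ) (hf : Continuous f) (hg : Continuous g)
    (h1 : Covers cM cN f) (h2 : Covers cN cP g) :
    ∃ z : ℝ × ℝ, cM z ∈ openSquare ∧ cN (f z) ∈ openSquare ∧ g (f z) ∈ P := by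
  obtain ⟨hexF, hentF⟩ := h1
  obtain ⟨hexG, hentG⟩ := h2
  -- clamp to [-1,1]
  set cl : ℝ → ℝ := fun r => max (-1) (min 1 r) with hcl
  have hcl_cont : Continuous cl := by fun_prop
  have hcl_mem : ∀ r, cl r ∈ Set.Icc (-1:ℝ) 1 := by
    intro r
    exact ⟨le_max_left _ _, by simp [hcl]⟩
  have hcl_lo : ∀ r : ℝ, r ≤ -1 → cl r = -1 := by
    intro r h
    have : min 1 r ≤ -1 := le_trans (min_le_right _ _) h
    simp [hcl, max_eq_left this]
  have hcl_hi : ∀ r : ℝ, 1 ≤ r → cl r = 1 := by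
    intro r h
    have h1 : min 1 r = 1 := min_eq_left h
    simp [hcl, h1]
  have hcl_id : ∀ r ∈ Set.Icc (-1:ℝ) 1, cl r = r := by
    intro r hr
    have h1 : min 1 r = r := min_eq_right hr.2
    simp [hcl, h1, max_eq_right hr.1]
  set φ : ℝ → ℝ × ℝ := fun t => cN (f (cM.symm (t, 0))) with hφ
  set ψ : ℝ → ℝ × ℝ := fun t => cP (g (cN.symm (cl (φ t).1, cl (φ t).2))) with hψ
  have hφcont : Continuous φ := by
    apply cN.continuous.comp
    apply hf.comp
    apply cM.symm.continuous.comp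
    fun_prop
  have hψcont : Continuous fun t => (ψ t).1 := by
    apply Continuous.fst
    apply cP.continuous.comp
    apply hg.comp
    apply cN.symm.continuous.comp
    exact ((hcl_cont.comp hφcont.fst).prodMk (hcl_cont.comp hφcont.snd))
  have h0 : (0:ℝ) ∈ Set.Icc (-1:ℝ) 1 := by norm_num
  -- if φ t is at or beyond a vertical edge, ψ t is beyond an edge
  have hedgeL : ∀ t : ℝ, (φ t).1 ≤ -1 → ((ψ t).1 < -1 ∨ 1 < (ψ t).1) := by
    intro t ht
    have hx : cl (φ t).1 = -1 := hcl_lo _ ht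
    rcases hexG with ⟨hl, _⟩ | ⟨_, hr⟩
    · left; have := hl (cl (φ t).2) (hcl_mem _); rw [hψ]; simpa [hx] using this
    · right; have := hr (cl (φ t).2) (hcl_mem _); rw [hψ]; simpa [hx] using this
  have hedgeR : ∀ t : ℝ, 1 ≤ (φ t).1 → ((ψ t).1 < -1 ∨ 1 < (ψ t).1) := by
    intro t ht
    have hx : cl (φ t).1 = 1 := hcl_hi _ ht
    rcases hexG with ⟨_, hr⟩ | ⟨hl, _⟩
    · right; have := hr (cl (φ t).2) (hcl_mem _); rw [hψ]; simpa [hx] using this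
    · left; have := hl (cl (φ t).2) (hcl_mem _); rw [hψ]; simpa [hx] using this
  -- opposite signs at the two endpoints
  have hsign : ((ψ (-1)).1 < -1 ∧ 1 < (ψ 1).1) ∨ ((ψ 1).1 < -1 ∧ 1 < (ψ (-1)).1) := by
    rcases hexF with ⟨hFl, hFr⟩ | ⟨hFl, hFr⟩ <;>
      rcases hexG with ⟨hGl, hGr⟩ | ⟨hGl, hGr⟩
    · left
      have hm : cl (φ (-1)).1 = -1 := hcl_lo _ (hFl 0 h0).le
      have hp : cl (φ 1).1 = 1 := hcl_hi _ (hFr 0 h0).le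
      exact ⟨by rw [hψ]; simpa [hm] using hGl (cl (φ (-1)).2) (hcl_mem _),
             by rw [hψ]; simpa [hp] using hGr (cl (φ 1).2) (hcl_mem _)⟩
    · right
      have hm : cl (φ (-1)).1 = -1 := hcl_lo _ (hFl 0 h0).le
      have hp : cl (φ 1).1 = 1 := hcl_hi _ (hFr 0 h0).le
      exact ⟨by rw [hψ]; simpa [hp] using hGl (cl (φ 1).2) (hcl_mem _),
             by rw [hψ]; simpa [hm] using hGr (cl (φ (-1)).2) (hcl_mem _)⟩
    · right
      have hm : cl (φ (-1)).1 = 1 := hcl_hi _ (hFr 0 h0).le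
      have hp : cl (φ 1).1 = -1 := hcl_lo _ (hFl 0 h0).le
      exact ⟨by rw [hψ]; simpa [hp] using hGl (cl (φ 1).2) (hcl_mem _),
             by rw [hψ]; simpa [hm] using hGr (cl (φ (-1)).2) (hcl_mem _)⟩
    · left
      have hm : cl (φ (-1)).1 = 1 := hcl_hi _ (hFr 0 h0).le
      have hp : cl (φ 1).1 = -1 := hcl_lo _ (hFl 0 h0).le
      exact ⟨by rw [hψ]; simpa [hm] using hGl (cl (φ (-1)).2) (hcl_mem _),
             by rw [hψ]; simpa [hp] using hGr (cl (φ 1).2) (hcl_mem _)⟩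
  -- intermediate value theorem: find t* with (ψ t*).1 = 0
  have hiv : ∃ t ∈ Set.Icc (-1:ℝ) 1, (ψ t).1 = 0 := by
    rcases hsign with ⟨ha, hb⟩ | ⟨ha, hb⟩
    · have h01 : (0:ℝ) ∈ Set.Icc ((ψ (-1)).1) ((ψ 1).1) :=
        ⟨ha.le.trans (by norm_num), by linarith⟩
      have := intermediate_value_Icc (by norm_num : (-1:ℝ) ≤ 1)
        (hψcont.continuousOn) h01
      obtain ⟨t, ht, ht0⟩ := this
      exact ⟨t, ht, ht0⟩
    · have h01 : (0:ℝ) ∈ Set.Icc ((ψ 1).1) ((ψ (-1)).1) :=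
        ⟨ha.le.trans (by norm_num), by linarith⟩
      have := intermediate_value_Icc' (by norm_num : (-1:ℝ) ≤ 1)
        (hψcont.continuousOn) h01
      obtain ⟨t, ht, ht0⟩ := this
      exact ⟨t, ht, ht0⟩
  obtain ⟨t, htI, ht0⟩ := hiv
  -- t is interior
  have hψm1 : (ψ (-1)).1 ≠ 0 := by
    rcases hsign with ⟨ha, _⟩ | ⟨_, hb⟩ <;> [linarith; linarith]
  have hψp1 : (ψ 1).1 ≠ 0 := by
    rcases hsign with ⟨_, hb⟩ | ⟨ha, _⟩ <;> [linarith; linarith]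
  have htm : t ≠ -1 := fun h => hψm1 (h ▸ ht0)
  have htp : t ≠ 1 := fun h => hψp1 (h ▸ ht0)
  have htIoo : t ∈ Set.Ioo (-1:ℝ) 1 :=
    ⟨lt_of_le_of_ne htI.1 (Ne.symm htm), lt_of_le_of_ne htI.2 htp⟩
  -- φ t is in the open square
  have hx : (φ t).1 ∈ Set.Ioo (-1:ℝ) 1 := by
    constructor
    · by_contra h
      push_neg at h
      rcases hedgeL t h with h' | h' <;> rw [ht0] at h' <;> norm_num at h'
    · by_contra h
      push_neg at h
      rcases hedgeR t h with h' | h' <;> rw [ht0] at h' <;> norm_num at h'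
  have hy : (φ t).2 ∈ Set.Ioo (-1:ℝ) 1 := by
    have hp : (t, (0:ℝ)) ∈ unitSquare := ⟨⟨htI.1, htI.2⟩, h0⟩
    have := hentF (t, 0) hp
    rw [Set.mem_prod] at this
    push_neg at this
    have := this ⟨hx.1.le, hx.2.le⟩
    simpa using this
  have hclx : cl (φ t).1 = (φ t).1 := hcl_id _ ⟨hx.1.le, hx.2.le⟩
  have hcly : cl (φ t).2 = (φ t).2 := hcl_id _ ⟨hy.1.le, hy.2.le⟩
  -- the witness point
  refine ⟨cM.symm (t, 0), ?_, ?_, ?_⟩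
  · rw [cM.apply_symm_apply]
    exact ⟨htIoo, by norm_num⟩
  · exact ⟨hx, hy⟩
  · -- ψ t = cP (g (f z))
    have hψt : ψ t = cP (g (f (cM.symm (t, 0)))) := by
      rw [hψ]
      simp only [hclx, hcly]
      rw [Prod.mk.eta, hφ]; simp only [cN.symm_apply_apply]
    have hmem : ψ t ∈ unitSquare := by
      have hp : ((φ t).1, (φ t).2) ∈ unitSquare :=
        ⟨⟨hx.1.le, hx.2.le⟩, ⟨hy.1.le, hy.2.le⟩⟩
      have h2 := hentG ((φ t).1, (φ t).2) hp
      rw [Set.mem_prod] at h2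
      push_neg at h2
      have hψeq : ψ t = cP (g (cN.symm ((φ t).1, (φ t).2))) := by
        show cP (g (cN.symm (cl (φ t).1, cl (φ t).2))) = _
        rw [hclx, hcly]
      have hy2 := h2 (by rw [← hψeq, ht0]; norm_num)
      rw [← hψeq] at hy2
      have hy3 : (ψ t).2 ∈ Set.Ioo (-1:ℝ) 1 := by simpa using hy2
      exact ⟨⟨by rw [ht0]; norm_num, by rw [ht0]; norm_num⟩, ⟨hy3.1.le, hy3.2.le⟩⟩
    rw [hψt] at hmem
    rw [← hP] at hmem
    obtain ⟨w, hwP, hw⟩ := hmem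
    rwa [← cP.injective hw]
end

section
/- Suppose for each i = 1, 2, ... we have h-sets N_{i-1}, N_i in ℝ² and continuous maps f_i with N_{i-1} f_i-covers N_i, and suppose that the following finite shadowing property holds: for every k and every horizontal disk h in N_0 there exists x_k ∈ |h| whose trajectory under f_1, ..., f_k visits the interiors of N_1, ..., N_k. If each |h| is compact and each map f_i is continuous, then for every horizontal disk h in N_0 there exists a point z_0 ∈ |h| and a forward trajectory z_0, z_1, z_2, ... with f_i(z_{i-1}) = z_i and z_i ∈ int N_i for all i ≥ 1. -/
/-- A horizontal disk in the h-set `(N, c)`: a continuous map `h : [-1,1] → N`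
with `π_x (c ∘ h)(s) = s`. -/
def IsHorizontalDisk (N : Set (ℝ × ℝ)) (c : ℝ × ℝ ≃ₜ ℝ × ℝ) (h : ℝ → ℝ × ℝ) : Prop :=
  ContinuousOn h (Set.Icc (-1 : ℝ) 1) ∧
    ∀ s ∈ Set.Icc (-1 : ℝ) 1, h s ∈ N ∧ (c (h s)).1 = s

/-- The trajectory of `x` under the sequence of maps `f₁, f₂, …`. -/
def traj (f : ℕ → ℝ × ℝ → ℝ × ℝ) (x : ℝ × ℝ) : ℕ → ℝ × ℝ
  | 0 => x
  | n + 1 => f (n + 1) (traj f x n)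

/-- given an infinite chain of coverings `N_{i-1} ⟹f_i N_i` and the
finite shadowing property, every horizontal disk `h` in `N₀` contains a point
`z₀` with an infinite forward trajectory `z_i ∈ int N_i` for all `i ≥ 1`. -/
theorem infinite_forward_shadowing
    (N : ℕ → Set (ℝ × ℝ)) (c : ℕ → ℝ × ℝ ≃ₜ ℝ × ℝ)
    (hN : ∀ i, c i '' N i = unitSquare)
    (f : ℕ → ℝ × ℝ → ℝ × ℝ) (hf : ∀ i, Continuous (f i))
    (hcov : ∀ i : ℕ, Covers (c i) (c (i + 1)) (f (i + 1)))
    (hfin : ∀ (k : ℕ) (h : ℝ → ℝ × ℝ), IsHorizontalDisk (N 0) (c 0) h →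
      ∃ x ∈ h '' Set.Icc (-1 : ℝ) 1,
        ∀ i : ℕ, 1 ≤ i → i ≤ k → c i (traj f x i) ∈ openSquare)
    (h : ℝ → ℝ × ℝ) (hh : IsHorizontalDisk (N 0) (c 0) h) :
    ∃ z : ℕ → ℝ × ℝ, z 0 ∈ h '' Set.Icc (-1 : ℝ) 1 ∧
      ∀ i : ℕ, z (i + 1) = f (i + 1) (z i) ∧ c (i + 1) (z (i + 1)) ∈ openSquare := by
  classical
  choose x hx1 hx2 using fun k => hfin k h hh
  have hK : IsCompact (h '' Set.Icc (-1:ℝ) 1) :=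
    isCompact_Icc.image_of_continuousOn hh.1
  obtain ⟨z0, hz0, φ, hφ, hlim⟩ := hK.tendsto_subseq hx1
  have htrajc : ∀ i, Continuous fun p => traj f p i := by
    intro i
    induction i with
    | zero => exact continuous_id
    | succ n ih => exact (hf (n+1)).comp ih
  set w := traj f z0 with hw
  have hclosed : IsClosed unitSquare := isClosed_Icc.prod isClosed_Icc
  have hsub : openSquare ⊆ unitSquare :=
    Set.prod_mono Set.Ioo_subset_Icc_self Set.Ioo_subset_Icc_self
  have hmem : ∀ i, 1 ≤ i → c i (w i) ∈ unitSquare := by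
    intro i hi
    have htend : Filter.Tendsto (fun k => (c i) (traj f ((x ∘ φ) k) i))
        Filter.atTop (nhds ((c i) (w i))) :=
      (((c i).continuous.comp (htrajc i)).tendsto z0).comp hlim
    refine hclosed.mem_of_tendsto htend ?_
    filter_upwards [Filter.eventually_ge_atTop i] with k hk
    exact hsub (hx2 (φ k) i hi (hk.trans hφ.le_apply))
  have hbase : c 0 (w 0) ∈ unitSquare := by
    obtain ⟨s, hs, hse⟩ := hz0
    have : w 0 = h s := hse.symm
    rw [this, ← hN 0]
    exact Set.mem_image_of_mem _ (hh.2 s hs).1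
  have hall : ∀ i, c i (w i) ∈ unitSquare := by
    intro i
    cases i with
    | zero => exact hbase
    | succ n => exact hmem (n+1) (Nat.succ_le_succ (Nat.zero_le n))
  have hstep : ∀ i, w (i+1) = f (i+1) ((c i).symm (c i (w i))) := by
    intro i
    rw [(c i).symm_apply_apply]
    rfl
  have hx_strict : ∀ i, -1 < (c i (w i)).1 ∧ (c i (w i)).1 < 1 := by
    intro i
    have hp := hall i
    have hq := hall (i+1)
    obtain ⟨hedge, -⟩ := hcov i
    set p := c i (w i) with hpdef
    have hp2 : p.2 ∈ Set.Icc (-1:ℝ) 1 := hp.2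
    have hq1 : (c (i+1) (w (i+1))).1 ∈ Set.Icc (-1:ℝ) 1 := hq.1
    constructor
    · rcases lt_or_eq_of_le hp.1.1 with h' | h'
      · exact h'
      · exfalso
        have hpe : ((-1 : ℝ), p.2) = p := by
          ext <;> simp [← h']
        have hwrew : w (i+1) = f (i+1) ((c i).symm (-1, p.2)) := by
          rw [hstep i, ← hpdef, hpe]
        rcases hedge with ⟨h1, -⟩ | ⟨-, h2⟩
        · have := h1 p.2 hp2
          rw [← hwrew] at this
          exact absurd hq1.1 (by linarith)
        · have := h2 p.2 hp2
          rw [← hwrew] at this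
          exact absurd hq1.2 (by linarith)
    · rcases lt_or_eq_of_le hp.1.2 with h' | h'
      · exact h'
      · exfalso
        have hpe : ((1 : ℝ), p.2) = p := by
          ext <;> simp [h']
        have hwrew : w (i+1) = f (i+1) ((c i).symm (1, p.2)) := by
          rw [hstep i, ← hpdef, hpe]
        rcases hedge with ⟨-, h2⟩ | ⟨h1, -⟩
        · have := h2 p.2 hp2
          rw [← hwrew] at this
          exact absurd hq1.2 (by linarith)
        · have := h1 p.2 hp2
          rw [← hwrew] at this
          exact absurd hq1.1 (by linarith)
  have hopen : ∀ i, c (i+1) (w (i+1)) ∈ openSquare := by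
    intro i
    obtain ⟨-, hcond2⟩ := hcov i
    have hp := hall i
    have h2 := hcond2 (c i (w i)) hp
    rw [← hstep i] at h2
    have hq := hall (i+1)
    have hy : (c (i+1) (w (i+1))).2 ∈ Set.Ioo (-1:ℝ) 1 := by
      by_contra hy
      exact h2 ⟨hq.1, hy⟩
    exact ⟨hx_strict (i+1), hy⟩
  refine ⟨w, ?_, fun i => ⟨rfl, hopen i⟩⟩
  exact hz0
end

section
/- Let M, N be h-sets in ℝ² and f : ℝ² → ℝ² a continuous map with a continuous inverse on N. If M f-back-covers N (i.e., N^T f⁻¹-covers M^T), and N g-covers P for some h-set P and continuous g, then there exists z ∈ int M with f(z) ∈ int N and g(f(z)) ∈ P. (Composability of back-covering followed by covering.) -/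
set_option maxHeartbeats 1000000

open Finset Set Filter Topology

def dr (a b : Fin 3) : ZMod 2 := if (a = 0 ∧ b = 1) ∨ (a = 1 ∧ b = 0) then 1 else 0

lemma tele (a : ℕ → ZMod 2) (n : ℕ) : ∑ j ∈ range n, (a j + a (j+1)) = a 0 + a n := by
  have h : ∀ j, a j + a (j+1) = a (j+1) - a j := by
    intro j; rw [sub_eq_add_neg, CharTwo.neg_eq, add_comm]
  rw [Finset.sum_congr rfl fun j _ => h j, Finset.sum_range_sub]
  rw [sub_eq_add_neg, CharTwo.neg_eq, add_comm]

lemma full_of_odd : ∀ a b c : Fin 3, dr a b + dr b c + dr a c = 1 →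
    (a = 0 ∨ b = 0 ∨ c = 0) ∧ (a = 1 ∨ b = 1 ∨ c = 1) ∧ (a = 2 ∨ b = 2 ∨ c = 2) := by
  decide

lemma zmod2_cases : ∀ x : ZMod 2, x = 0 ∨ x = 1 := by decide

/-- 2D cubical Sperner / discrete Poincaré–Miranda. -/
lemma sperner (n : ℕ) (hn : 1 ≤ n) (L : ℕ → ℕ → Fin 3)
    (hleft : ∀ j ≤ n, L 0 j = 0)
    (hright : ∀ j ≤ n, L n j ≠ 0)
    (hbot : ∀ i ≤ n, L i 0 ≠ 2)
    (htop : ∀ i ≤ n, L i n ≠ 1) :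
    ∃ i < n, ∃ j < n, ∃ v₀ v₁ v₂ : ℕ × ℕ,
      ((v₀.1 = i ∨ v₀.1 = i+1) ∧ (v₀.2 = j ∨ v₀.2 = j+1)) ∧
      ((v₁.1 = i ∨ v₁.1 = i+1) ∧ (v₁.2 = j ∨ v₁.2 = j+1)) ∧
      ((v₂.1 = i ∨ v₂.1 = i+1) ∧ (v₂.2 = j ∨ v₂.2 = j+1)) ∧
      L v₀.1 v₀.2 = 0 ∧ L v₁.1 v₁.2 = 1 ∧ L v₂.1 v₂.2 = 2 := by
  set dh : ℕ → ℕ → ZMod 2 := fun i j => dr (L i j) (L (i+1) j) with hdh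
  set dv : ℕ → ℕ → ZMod 2 := fun i j => dr (L i j) (L i (j+1)) with hdv
  set dd : ℕ → ℕ → ZMod 2 := fun i j => dr (L i j) (L (i+1) (j+1)) with hdd
  set tl : ℕ → ℕ → ZMod 2 := fun i j => dh i j + dv (i+1) j + dd i j with htl
  set tu : ℕ → ℕ → ZMod 2 := fun i j => dv i j + dh i (j+1) + dd i j with htu
  have key : ∑ i ∈ range n, ∑ j ∈ range n, (tl i j + tu i j) = 1 := by
    have split : ∀ i j, tl i j + tu i j = (dh i j + dh i (j+1)) + (dv i j + dv (i+1) j) := by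
      intro i j
      have : ∀ x y z w d : ZMod 2, (x + y + d) + (z + w + d) = (x + w) + (z + y) := by decide
      exact this _ _ _ _ _
    simp only [split]
    rw [Finset.sum_congr rfl (fun i _ => Finset.sum_add_distrib), Finset.sum_add_distrib]
    have t1 : ∑ i ∈ range n, ∑ j ∈ range n, (dh i j + dh i (j+1))
        = ∑ i ∈ range n, (dh i 0 + dh i n) :=
      Finset.sum_congr rfl fun i _ => tele (dh i) n
    have t2 : ∑ i ∈ range n, ∑ j ∈ range n, (dv i j + dv (i+1) j)
        = ∑ j ∈ range n, (dv 0 j + dv n j) := by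
      rw [Finset.sum_comm]
      refine Finset.sum_congr rfl fun j _ => ?_
      have := tele (fun i => dv i j) n
      simpa [add_comm] using this
    rw [t1, t2]
    -- boundary vanishing
    have htopz : ∀ i < n, dh i n = 0 := by
      intro i hi
      have h1 := htop i (le_of_lt hi)
      have h2 := htop (i+1) hi
      simp only [hdh, dr]
      rw [if_neg]; rintro (⟨ha, hb⟩ | ⟨ha, hb⟩) <;> [exact h2 hb; exact h1 ha]
    have hlz : ∀ j < n, dv 0 j = 0 := by
      intro j hj
      simp only [hdv, dr, hleft j (le_of_lt hj), hleft (j+1) hj]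
      decide
    have hrz : ∀ j < n, dv n j = 0 := by
      intro j hj
      have h1 := hright j (le_of_lt hj)
      have h2 := hright (j+1) hj
      simp only [hdv, dr]
      rw [if_neg]; rintro (⟨ha, hb⟩ | ⟨ha, hb⟩) <;> [exact h1 ha; exact h2 hb]
    have e1 : ∑ i ∈ range n, (dh i 0 + dh i n) = ∑ i ∈ range n, dh i 0 := by
      refine Finset.sum_congr rfl fun i hi => ?_
      rw [htopz i (Finset.mem_range.mp hi), add_zero]
    have e2 : ∑ j ∈ range n, (dv 0 j + dv n j) = 0 := by
      refine Finset.sum_eq_zero fun j hj => ?_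
      rw [hlz j (Finset.mem_range.mp hj), hrz j (Finset.mem_range.mp hj), add_zero]
    rw [e1, e2, add_zero]
    -- the bottom row sums to 1
    set m : ℕ → ZMod 2 := fun i => if L i 0 = 0 then 0 else 1 with hm
    have step : ∀ i < n, dh i 0 = m (i+1) - m i := by
      intro i hi
      have b1 := hbot i (le_of_lt hi)
      have b2 := hbot (i+1) hi
      have gen : ∀ a b : Fin 3, a ≠ 2 → b ≠ 2 →
          dr a b = (if b = 0 then (0:ZMod 2) else 1) - (if a = 0 then 0 else 1) := by decide
      simp only [hdh, hm]
      exact gen _ _ b1 b2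
    calc ∑ i ∈ range n, dh i 0 = ∑ i ∈ range n, (m (i+1) - m i) :=
          Finset.sum_congr rfl fun i hi => step i (Finset.mem_range.mp hi)
      _ = m n - m 0 := Finset.sum_range_sub m n
      _ = 1 := by
          simp only [hm, hleft 0 (Nat.zero_le n), if_pos rfl]
          rw [if_neg (hright 0 (Nat.zero_le n))]
          decide
  -- extract a nonzero triangle
  have : ∃ i < n, ∃ j < n, tl i j = 1 ∨ tu i j = 1 := by
    by_contra h
    push_neg at h
    have : ∑ i ∈ range n, ∑ j ∈ range n, (tl i j + tu i j) = 0 := by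
      refine Finset.sum_eq_zero fun i hi => Finset.sum_eq_zero fun j hj => ?_
      have hi' := Finset.mem_range.mp hi
      have hj' := Finset.mem_range.mp hj
      obtain ⟨h1, h2⟩ := h i hi' j hj'
      rcases zmod2_cases (tl i j) with e | e
      · rcases zmod2_cases (tu i j) with e' | e'
        · rw [e, e', add_zero]
        · exact absurd e' h2
      · exact absurd e h1
    rw [this] at key
    exact absurd key (by decide)
  obtain ⟨i, hi, j, hj, hcase⟩ := this
  refine ⟨i, hi, j, hj, ?_⟩
  rcases hcase with e | e
  · have := full_of_odd (L i j) (L (i+1) j) (L (i+1) (j+1)) e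
    obtain ⟨h0, h1, h2⟩ := this
    have pick : ∀ k : Fin 3, (L i j = k ∨ L (i+1) j = k ∨ L (i+1) (j+1) = k) →
        ∃ v : ℕ × ℕ, ((v.1 = i ∨ v.1 = i+1) ∧ (v.2 = j ∨ v.2 = j+1)) ∧ L v.1 v.2 = k := by
      rintro k (h | h | h)
      exacts [⟨(i,j), ⟨Or.inl rfl, Or.inl rfl⟩, h⟩, ⟨(i+1,j), ⟨Or.inr rfl, Or.inl rfl⟩, h⟩,
        ⟨(i+1,j+1), ⟨Or.inr rfl, Or.inr rfl⟩, h⟩]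
    obtain ⟨v₀, hv₀, hl₀⟩ := pick 0 h0
    obtain ⟨v₁, hv₁, hl₁⟩ := pick 1 h1
    obtain ⟨v₂, hv₂, hl₂⟩ := pick 2 h2
    exact ⟨v₀, v₁, v₂, hv₀, hv₁, hv₂, hl₀, hl₁, hl₂⟩
  · have := full_of_odd (L i j) (L i (j+1)) (L (i+1) (j+1)) e
    obtain ⟨h0, h1, h2⟩ := this
    have pick : ∀ k : Fin 3, (L i j = k ∨ L i (j+1) = k ∨ L (i+1) (j+1) = k) →
        ∃ v : ℕ × ℕ, ((v.1 = i ∨ v.1 = i+1) ∧ (v.2 = j ∨ v.2 = j+1)) ∧ L v.1 v.2 = k := by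
      rintro k (h | h | h)
      exacts [⟨(i,j), ⟨Or.inl rfl, Or.inl rfl⟩, h⟩, ⟨(i,j+1), ⟨Or.inl rfl, Or.inr rfl⟩, h⟩,
        ⟨(i+1,j+1), ⟨Or.inr rfl, Or.inr rfl⟩, h⟩]
    obtain ⟨v₀, hv₀, hl₀⟩ := pick 0 h0
    obtain ⟨v₁, hv₁, hl₁⟩ := pick 1 h1
    obtain ⟨v₂, hv₂, hl₂⟩ := pick 2 h2
    exact ⟨v₀, v₁, v₂, hv₀, hv₁, hv₂, hl₀, hl₁, hl₂⟩


-- grid point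
noncomputable def gp (n : ℕ) (v : ℕ × ℕ) : ℝ × ℝ :=
  (-1 + 2 * v.1 / n, -1 + 2 * v.2 / n)

lemma coord_mem {n i : ℕ} (hn : 1 ≤ n) (hi : i ≤ n) :
    (-1 : ℝ) + 2 * i / n ∈ Set.Icc (-1:ℝ) 1 := by
  have hn' : (0:ℝ) < n := by exact_mod_cast hn
  have hi' : (i:ℝ) ≤ n := by exact_mod_cast hi
  constructor
  · have : (0:ℝ) ≤ 2 * i / n := by positivity
    linarith
  · have h2 : 2 * (i:ℝ) / n ≤ 2 := by
      rw [div_le_iff₀ hn']; nlinarith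
    linarith

lemma gp_mem {n : ℕ} (hn : 1 ≤ n) {v : ℕ × ℕ} (h1 : v.1 ≤ n) (h2 : v.2 ≤ n) :
    gp n v ∈ unitSquare :=
  ⟨coord_mem hn h1, coord_mem hn h2⟩

lemma gp_dist {n : ℕ} (hn : 1 ≤ n) {v w : ℕ × ℕ}
    (h1 : v.1 = w.1 ∨ v.1 + 1 = w.1 ∨ w.1 + 1 = v.1)
    (h2 : v.2 = w.2 ∨ v.2 + 1 = w.2 ∨ w.2 + 1 = v.2) :
    dist (gp n v) (gp n w) ≤ 2 / n := by
  have hn' : (0:ℝ) < n := by exact_mod_cast hn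
  have key : ∀ a b : ℕ, (a = b ∨ a + 1 = b ∨ b + 1 = a) →
      dist ((-1:ℝ) + 2 * a / n) (-1 + 2 * b / n) ≤ 2 / n := by
    rintro a b (rfl | h | h)
    · simp [dist_self]; positivity
    · subst h
      rw [Real.dist_eq]
      have : (-1 + 2 * (a:ℝ) / n) - (-1 + 2 * (↑(a+1):ℝ) / n) = -(2/n) := by
        push_cast; field_simp; ring
      rw [this, abs_neg, abs_of_pos (by positivity)]
    · subst h
      rw [Real.dist_eq]
      have : (-1 + 2 * (↑(b+1):ℝ) / n) - (-1 + 2 * (b:ℝ) / n) = 2/n := by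
        push_cast; field_simp; ring
      rw [this, abs_of_pos (by positivity)]
  rw [Prod.dist_eq]
  exact max_le (key _ _ h1) (key _ _ h2)

/-- Poincaré–Miranda theorem in two dimensions on `[-1,1]²`. -/
lemma miranda (G : ℝ × ℝ → ℝ × ℝ) (hG : ContinuousOn G unitSquare)
    (hl : ∀ y ∈ Set.Icc (-1:ℝ) 1, (G (-1, y)).1 < 0)
    (hr : ∀ y ∈ Set.Icc (-1:ℝ) 1, 0 < (G (1, y)).1)
    (hb : ∀ x ∈ Set.Icc (-1:ℝ) 1, (G (x, -1)).2 < 0)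
    (ht : ∀ x ∈ Set.Icc (-1:ℝ) 1, 0 < (G (x, 1)).2) :
    ∃ u ∈ unitSquare, G u = 0 := by
  -- per-n: three nearby grid points with labels 0,1,2
  have main : ∀ n : ℕ, 1 ≤ n → ∃ p q r : ℝ × ℝ,
      p ∈ unitSquare ∧ q ∈ unitSquare ∧ r ∈ unitSquare ∧
      (G p).1 < 0 ∧ 0 ≤ (G q).1 ∧ (G q).2 < 0 ∧ 0 ≤ (G r).2 ∧
      dist p q ≤ 2 / n ∧ dist q r ≤ 2 / n := by
    intro n hn
    classical
    set L : ℕ → ℕ → Fin 3 := fun i j =>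
      if (G (gp n (i, j))).1 < 0 then 0 else if (G (gp n (i, j))).2 < 0 then 1 else 2 with hL
    have hn' : (n:ℝ) ≠ 0 := by positivity
    have hcoord0 : ∀ j : ℕ, gp n (0, j) = ((-1:ℝ), -1 + 2 * (j:ℝ) / n) := by
      intro j; simp [gp]
    have hcoordn : ∀ j : ℕ, gp n (n, j) = ((1:ℝ), -1 + 2 * (j:ℝ) / n) := by
      intro j; simp only [gp]
      congr 1
      field_simp
      norm_num
    have hcoord0' : ∀ i : ℕ, gp n (i, 0) = ((-1:ℝ) + 2 * (i:ℝ) / n, -1) := by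
      intro i; simp [gp]
    have hcoordn' : ∀ i : ℕ, gp n (i, n) = ((-1:ℝ) + 2 * (i:ℝ) / n, 1) := by
      intro i; simp only [gp]
      congr 1
      field_simp
      norm_num
    obtain ⟨i, hi, j, hj, v₀, v₁, v₂, hv₀, hv₁, hv₂, hl₀, hl₁, hl₂⟩ :=
      sperner n hn L
        (fun j hj => by
          simp only [hL, hcoord0 j]
          rw [if_pos (hl _ (coord_mem hn hj))])
        (fun j hj => by
          simp only [hL, hcoordn j]
          rw [if_neg (not_lt.mpr (le_of_lt (hr _ (coord_mem hn hj))))]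
          split <;> decide)
        (fun i hi => by
          simp only [hL, hcoord0' i]
          have h2 := hb _ (coord_mem hn hi)
          split <;> decide)
        (fun i hi => by
          simp only [hL, hcoordn' i]
          have h2 := ht _ (coord_mem hn hi)
          have h2' : ¬ (G ((-1:ℝ) + 2 * (i:ℝ) / n, 1)).2 < 0 := not_lt.mpr h2.le
          split <;> decide)
    have memv : ∀ v : ℕ × ℕ, ((v.1 = i ∨ v.1 = i+1) ∧ (v.2 = j ∨ v.2 = j+1)) →
        gp n v ∈ unitSquare := by
      rintro v ⟨h1, h2⟩
      refine gp_mem hn ?_ ?_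
      · rcases h1 with h | h <;> omega
      · rcases h2 with h | h <;> omega
    have distv : ∀ v w : ℕ × ℕ, ((v.1 = i ∨ v.1 = i+1) ∧ (v.2 = j ∨ v.2 = j+1)) →
        ((w.1 = i ∨ w.1 = i+1) ∧ (w.2 = j ∨ w.2 = j+1)) →
        dist (gp n v) (gp n w) ≤ 2 / n := by
      rintro v w ⟨a1, a2⟩ ⟨b1, b2⟩
      refine gp_dist hn ?_ ?_
      · rcases a1 with h | h <;> rcases b1 with h' | h' <;> omega
      · rcases a2 with h | h <;> rcases b2 with h' | h' <;> omega
    obtain ⟨a0, b0⟩ := v₀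
    obtain ⟨a1, b1⟩ := v₁
    obtain ⟨a2, b2⟩ := v₂
    have dec0 : (G (gp n (a0, b0))).1 < 0 := by
      by_contra hc
      simp only [hL] at hl₀
      rw [if_neg hc] at hl₀
      split at hl₀ <;> exact absurd hl₀ (by decide)
    have dec1a : ¬ (G (gp n (a1, b1))).1 < 0 := by
      intro hc
      simp only [hL] at hl₁
      rw [if_pos hc] at hl₁
      exact absurd hl₁ (by decide)
    have dec1b : (G (gp n (a1, b1))).2 < 0 := by
      by_contra hc
      simp only [hL] at hl₁
      rw [if_neg dec1a, if_neg hc] at hl₁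
      exact absurd hl₁ (by decide)
    have dec2 : 0 ≤ (G (gp n (a2, b2))).2 := by
      by_contra hc
      simp only [hL] at hl₂
      split at hl₂
      · exact absurd hl₂ (by decide)
      · rw [if_pos (not_le.mp hc)] at hl₂
        exact absurd hl₂ (by decide)
    exact ⟨gp n (a0, b0), gp n (a1, b1), gp n (a2, b2), memv _ hv₀, memv _ hv₁, memv _ hv₂,
      dec0, not_lt.mp dec1a, dec1b, dec2, distv _ _ hv₀ hv₁, distv _ _ hv₁ hv₂⟩
  classical
  choose p q r hp hq hr h1 h2 h3 h4 h5 h6 using fun k : ℕ => main (k+1) (Nat.le_add_left 1 k)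
  have hcomp : IsCompact unitSquare := isCompact_Icc.prod isCompact_Icc
  obtain ⟨a, ha, φ, hφ, hconv⟩ := hcomp.tendsto_subseq hq
  have hz : Tendsto (fun k : ℕ => 2 / ((k:ℝ) + 1)) atTop (𝓝 0) := by
    have := tendsto_one_div_add_atTop_nhds_zero_nat.const_mul (2:ℝ)
    simpa [mul_one_div, div_eq_mul_inv] using this
  have hbound : ∀ (d : ℕ → ℝ), (∀ k, d k ≤ 2 / ((k:ℝ) + 1)) → (∀ k, 0 ≤ d k) →
      Tendsto d atTop (𝓝 0) := fun d hd hd0 =>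
    squeeze_zero hd0 hd hz
  have hle : ∀ k : ℕ, (2:ℝ) / ((φ k : ℝ) + 1) ≤ 2 / ((k:ℝ) + 1) := by
    intro k
    have hk : (k:ℝ) ≤ φ k := by exact_mod_cast hφ.le_apply
    gcongr

  have hdp : Tendsto (fun k => dist (q (φ k)) (p (φ k))) atTop (𝓝 0) := by
    refine hbound _ (fun k => ?_) (fun k => dist_nonneg)
    rw [dist_comm]
    calc dist (p (φ k)) (q (φ k)) ≤ 2 / ((φ k : ℕ) + 1 : ℕ) := h5 (φ k)
      _ ≤ 2 / ((k:ℝ) + 1) := by push_cast; exact hle k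
  have hdr : Tendsto (fun k => dist (q (φ k)) (r (φ k))) atTop (𝓝 0) := by
    refine hbound _ (fun k => ?_) (fun k => dist_nonneg)
    calc dist (q (φ k)) (r (φ k)) ≤ 2 / ((φ k : ℕ) + 1 : ℕ) := h6 (φ k)
      _ ≤ 2 / ((k:ℝ) + 1) := by push_cast; exact hle k
  have hpc : Tendsto (fun k => p (φ k)) atTop (𝓝 a) := hconv.congr_dist hdp
  have hrc : Tendsto (fun k => r (φ k)) atTop (𝓝 a) := hconv.congr_dist hdr
  have tG : ∀ (s : ℕ → ℝ × ℝ), (∀ k, s k ∈ unitSquare) → Tendsto s atTop (𝓝 a) →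
      Tendsto (fun k => G (s k)) atTop (𝓝 (G a)) := by
    intro s hs hsc
    exact (hG a ha).tendsto.comp
      (tendsto_nhdsWithin_iff.mpr ⟨hsc, Filter.Eventually.of_forall hs⟩)
  have hGp := tG _ (fun k => hp (φ k)) hpc
  have hGq := tG _ (fun k => hq (φ k)) hconv
  have hGr := tG _ (fun k => hr (φ k)) hrc
  have e1 : (G a).1 ≤ 0 :=
    le_of_tendsto ((continuous_fst.tendsto _).comp hGp)
      (Filter.Eventually.of_forall fun k => (h1 (φ k)).le)
  have e2 : 0 ≤ (G a).1 :=
    ge_of_tendsto ((continuous_fst.tendsto _).comp hGq)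
      (Filter.Eventually.of_forall fun k => h2 (φ k))
  have e3 : (G a).2 ≤ 0 :=
    le_of_tendsto ((continuous_snd.tendsto _).comp hGq)
      (Filter.Eventually.of_forall fun k => (h3 (φ k)).le)
  have e4 : 0 ≤ (G a).2 :=
    ge_of_tendsto ((continuous_snd.tendsto _).comp hGr)
      (Filter.Eventually.of_forall fun k => h4 (φ k))
  refine ⟨a, ha, ?_⟩
  have : G a = (0, 0) := Prod.ext (le_antisymm e1 e2) (le_antisymm e3 e4)
  exact this

lemma cross₀ (F H : ℝ × ℝ → ℝ) (hF : ContinuousOn F unitSquare) (hH : ContinuousOn H unitSquare)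
    (f1 : ∀ y ∈ Set.Icc (-1:ℝ) 1, F (-1, y) < -1) (f2 : ∀ y ∈ Set.Icc (-1:ℝ) 1, 1 < F (1, y))
    (g1 : ∀ x ∈ Set.Icc (-1:ℝ) 1, H (x, -1) < -1) (g2 : ∀ x ∈ Set.Icc (-1:ℝ) 1, 1 < H (x, 1)) :
    ∃ u ∈ unitSquare, F u = 0 ∧ H u = 0 := by
  obtain ⟨u, hu, h0⟩ := miranda (fun u => (F u, H u)) (hF.prodMk hH)
    (fun y hy => by simpa using (f1 y hy).trans_le (by norm_num))
    (fun y hy => by simpa using lt_trans (by norm_num : (0:ℝ) < 1) (f2 y hy))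
    (fun x hx => by simpa using (g1 x hx).trans_le (by norm_num))
    (fun x hx => by simpa using lt_trans (by norm_num : (0:ℝ) < 1) (g2 x hx))
  have h0' : (F u, H u) = ((0:ℝ), (0:ℝ)) := by simpa [Prod.ext_iff] using h0
  exact ⟨u, hu, congrArg Prod.fst h0', congrArg Prod.snd h0'⟩

lemma cross (F H : ℝ × ℝ → ℝ) (hF : ContinuousOn F unitSquare) (hH : ContinuousOn H unitSquare)
    (hFb : ((∀ y ∈ Set.Icc (-1:ℝ) 1, F (-1, y) < -1) ∧ (∀ y ∈ Set.Icc (-1:ℝ) 1, 1 < F (1, y))) ∨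
           ((∀ y ∈ Set.Icc (-1:ℝ) 1, F (1, y) < -1) ∧ (∀ y ∈ Set.Icc (-1:ℝ) 1, 1 < F (-1, y))))
    (hHb : ((∀ x ∈ Set.Icc (-1:ℝ) 1, H (x, -1) < -1) ∧ (∀ x ∈ Set.Icc (-1:ℝ) 1, 1 < H (x, 1))) ∨
           ((∀ x ∈ Set.Icc (-1:ℝ) 1, H (x, 1) < -1) ∧ (∀ x ∈ Set.Icc (-1:ℝ) 1, 1 < H (x, -1)))) :
    ∃ u ∈ openSquare, F u = 0 ∧ H u = 0 := by
  have main : ∃ u ∈ unitSquare, F u = 0 ∧ H u = 0 := by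
    rcases hFb with ⟨f1, f2⟩ | ⟨f1, f2⟩ <;> rcases hHb with ⟨g1, g2⟩ | ⟨g1, g2⟩
    · exact cross₀ F H hF hH f1 f2 g1 g2
    · obtain ⟨u, hu, e1, e2⟩ := cross₀ F (fun u => -H u) hF hH.neg f1 f2
        (fun x hx => show -H (x, -1) < -1 by linarith [g2 x hx])
        (fun x hx => show 1 < -H (x, 1) by linarith [g1 x hx])
      exact ⟨u, hu, e1, by simpa using e2⟩
    · obtain ⟨u, hu, e1, e2⟩ := cross₀ (fun u => -F u) H hF.neg hH
        (fun y hy => show -F (-1, y) < -1 by linarith [f2 y hy])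
        (fun y hy => show 1 < -F (1, y) by linarith [f1 y hy]) g1 g2
      exact ⟨u, hu, by simpa using e1, e2⟩
    · obtain ⟨u, hu, e1, e2⟩ := cross₀ (fun u => -F u) (fun u => -H u) hF.neg hH.neg
        (fun y hy => show -F (-1, y) < -1 by linarith [f2 y hy])
        (fun y hy => show 1 < -F (1, y) by linarith [f1 y hy])
        (fun x hx => show -H (x, -1) < -1 by linarith [g2 x hx])
        (fun x hx => show 1 < -H (x, 1) by linarith [g1 x hx])
      exact ⟨u, hu, by simpa using e1, by simpa using e2⟩
  obtain ⟨u, hu, e1, e2⟩ := main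
  obtain ⟨u1, u2⟩ := u
  have hm1 : u1 ∈ Set.Icc (-1:ℝ) 1 := hu.1
  have hm2 : u2 ∈ Set.Icc (-1:ℝ) 1 := hu.2
  have Fedge : ∀ y ∈ Set.Icc (-1:ℝ) 1, F (-1, y) ≠ 0 ∧ F (1, y) ≠ 0 := by
    intro y hy
    rcases hFb with ⟨f1, f2⟩ | ⟨f1, f2⟩
    · exact ⟨ne_of_lt (by linarith [f1 y hy]), ne_of_gt (by linarith [f2 y hy])⟩
    · exact ⟨ne_of_gt (by linarith [f2 y hy]), ne_of_lt (by linarith [f1 y hy])⟩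
  have Hedge : ∀ x ∈ Set.Icc (-1:ℝ) 1, H (x, -1) ≠ 0 ∧ H (x, 1) ≠ 0 := by
    intro x hx
    rcases hHb with ⟨g1, g2⟩ | ⟨g1, g2⟩
    · exact ⟨ne_of_lt (by linarith [g1 x hx]), ne_of_gt (by linarith [g2 x hx])⟩
    · exact ⟨ne_of_gt (by linarith [g2 x hx]), ne_of_lt (by linarith [g1 x hx])⟩
  have ne1 : u1 ≠ -1 := fun h => (Fedge u2 hm2).1 (by rw [← h]; exact e1)
  have ne1' : u1 ≠ 1 := fun h => (Fedge u2 hm2).2 (by rw [← h]; exact e1)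
  have ne2 : u2 ≠ -1 := fun h => (Hedge u1 hm1).1 (by rw [← h]; exact e2)
  have ne2' : u2 ≠ 1 := fun h => (Hedge u1 hm1).2 (by rw [← h]; exact e2)
  exact ⟨(u1, u2), ⟨⟨lt_of_le_of_ne hm1.1 (Ne.symm ne1), lt_of_le_of_ne hm1.2 ne1'⟩,
    ⟨lt_of_le_of_ne hm2.1 (Ne.symm ne2), lt_of_le_of_ne hm2.2 ne2'⟩⟩, e1, e2⟩

/-- Back-covering `M ⟸f N`: the transposed h-set `N^T` is `f⁻¹`-covered onto `M^T`,
where the transposition replaces `c` by `T ∘ c` with `T(x,y) = (y,x)`. -/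
def BackCovers (cM cN : ℝ × ℝ ≃ₜ ℝ × ℝ) (finv : ℝ × ℝ → ℝ × ℝ) : Prop :=
  Covers (cN.trans (Homeomorph.prodComm ℝ ℝ)) (cM.trans (Homeomorph.prodComm ℝ ℝ)) finv

/-- if `M` `f`-back-covers `N` (with `f` having a continuous inverse
on `N`) and `N` `g`-covers `P`, then there exists `z ∈ int M` with `f(z) ∈ int N`
and `g(f(z)) ∈ P`. -/
theorem backcover_then_cover
    (M N P : Set (ℝ × ℝ)) (cM cN cP : ℝ × ℝ ≃ₜ ℝ × ℝ)
    (hM : cM '' M = unitSquare) (hN : cN '' N = unitSquare) (hP : cP '' P = unitSquare)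
    (f finv g : ℝ × ℝ → ℝ × ℝ)
    (hf : Continuous f) (hg : Continuous g)
    (hfinv : ContinuousOn finv N)
    (hinv₁ : ∀ p ∈ N, f (finv p) = p)
    (hinv₂ : ∀ p, f p ∈ N → finv (f p) = p)
    (hback : BackCovers cM cN finv) (hcov : Covers cN cP g) :
    ∃ z : ℝ × ℝ, cM z ∈ openSquare ∧ cN (f z) ∈ openSquare ∧ g (f z) ∈ P := by
  obtain ⟨hbEdges, hbExit⟩ := hback
  obtain ⟨hcEdges, hcExit⟩ := hcov
  have hNmem : ∀ x : ℝ × ℝ, cN x ∈ unitSquare → x ∈ N := by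
    intro x hx
    rw [← hN] at hx
    obtain ⟨y, hy, he⟩ := hx
    rwa [← cN.injective he]
  have hPmem : ∀ x : ℝ × ℝ, cP x ∈ unitSquare → x ∈ P := by
    intro x hx
    rw [← hP] at hx
    obtain ⟨y, hy, he⟩ := hx
    rwa [← cP.injective he]
  have hAsymm : ∀ v : ℝ × ℝ, (cN.trans (Homeomorph.prodComm ℝ ℝ)).symm v = cN.symm (v.2, v.1) := by
    intro v
    simp only [Homeomorph.symm_trans_apply, Homeomorph.prodComm_symm, Homeomorph.coe_prodComm]
    rfl
  have hB : ∀ x : ℝ × ℝ, (cM.trans (Homeomorph.prodComm ℝ ℝ)) x = ((cM x).2, (cM x).1) := by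
    intro x
    simp only [Homeomorph.trans_apply, Homeomorph.coe_prodComm]
    rfl
  -- the two crossing functions
  set F : ℝ × ℝ → ℝ :=
    fun u => ((cM.trans (Homeomorph.prodComm ℝ ℝ)) (finv ((cN.trans (Homeomorph.prodComm ℝ ℝ)).symm u))).1 with hFdef
  set H : ℝ × ℝ → ℝ := fun u => (cP (g (cN.symm (u.2, u.1)))).1 with hHdef
  have hmaps : Set.MapsTo (fun u => (cN.trans (Homeomorph.prodComm ℝ ℝ)).symm u) unitSquare N := by
    intro u hu
    apply hNmem
    show cN ((cN.trans (Homeomorph.prodComm ℝ ℝ)).symm u) ∈ unitSquare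
    rw [hAsymm u, Homeomorph.apply_symm_apply]
    exact ⟨hu.2, hu.1⟩
  have hFcont : ContinuousOn F unitSquare := by
    apply Continuous.comp_continuousOn (continuous_fst.comp (cM.trans (Homeomorph.prodComm ℝ ℝ)).continuous)
    exact hfinv.comp ((cN.trans (Homeomorph.prodComm ℝ ℝ)).symm.continuous.continuousOn) hmaps
  have hHcont : ContinuousOn H unitSquare := by
    apply Continuous.continuousOn
    exact continuous_fst.comp (cP.continuous.comp (hg.comp (cN.symm.continuous.comp
      (continuous_snd.prodMk continuous_fst))))
  have hHb : ((∀ x ∈ Set.Icc (-1:ℝ) 1, H (x, -1) < -1) ∧ (∀ x ∈ Set.Icc (-1:ℝ) 1, 1 < H (x, 1))) ∨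
      ((∀ x ∈ Set.Icc (-1:ℝ) 1, H (x, 1) < -1) ∧ (∀ x ∈ Set.Icc (-1:ℝ) 1, 1 < H (x, -1))) := by
    rcases hcEdges with ⟨c1, c2⟩ | ⟨c1, c2⟩
    · exact Or.inl ⟨fun x hx => c1 x hx, fun x hx => c2 x hx⟩
    · exact Or.inr ⟨fun x hx => c1 x hx, fun x hx => c2 x hx⟩
  obtain ⟨u, huo, hF0, hH0⟩ := cross F H hFcont hHcont hbEdges hHb
  obtain ⟨u1, u2⟩ := u
  have huQ1 : u1 ∈ Set.Icc (-1:ℝ) 1 := Set.Ioo_subset_Icc_self huo.1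
  have huQ2 : u2 ∈ Set.Icc (-1:ℝ) 1 := Set.Ioo_subset_Icc_self huo.2
  have huQ : ((u1, u2) : ℝ × ℝ) ∈ unitSquare := ⟨huQ1, huQ2⟩
  set w : ℝ × ℝ := cN.symm (u2, u1) with hwdef
  have hwN : w ∈ N := by
    apply hNmem
    rw [hwdef, Homeomorph.apply_symm_apply]
    exact ⟨huQ2, huQ1⟩
  refine ⟨finv w, ?_, ?_, ?_⟩
  · -- cM z ∈ openSquare
    have hexit : ¬((cM (finv w)).2 ∈ Set.Icc (-1:ℝ) 1 ∧
        (cM (finv w)).1 ∈ (Set.Ioo (-1:ℝ) 1)ᶜ) := hbExit (u1, u2) huQ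
    have h2 : (cM (finv w)).2 = 0 := hF0
    have h1 : (cM (finv w)).1 ∈ Set.Ioo (-1:ℝ) 1 := by
      by_contra hc
      exact hexit ⟨by rw [h2]; exact ⟨by norm_num, by norm_num⟩, hc⟩
    exact ⟨h1, by rw [h2]; exact ⟨by norm_num, by norm_num⟩⟩
  · -- cN (f z) ∈ openSquare
    rw [hinv₁ w hwN, hwdef, Homeomorph.apply_symm_apply]
    exact ⟨huo.2, huo.1⟩
  · -- g (f z) ∈ P
    rw [hinv₁ w hwN]
    apply hPmem
    have hexit : ¬((cP (g w)).1 ∈ Set.Icc (-1:ℝ) 1 ∧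
        (cP (g w)).2 ∈ (Set.Ioo (-1:ℝ) 1)ᶜ) := hcExit (u2, u1) ⟨huQ2, huQ1⟩
    have h1 : (cP (g w)).1 = 0 := hH0
    have hIcc1 : (cP (g w)).1 ∈ Set.Icc (-1:ℝ) 1 := by
      rw [h1]; exact ⟨by norm_num, by norm_num⟩
    have h2 : (cP (g w)).2 ∈ Set.Ioo (-1:ℝ) 1 := by
      by_contra hc
      exact hexit ⟨hIcc1, hc⟩
    exact ⟨hIcc1, Set.Ioo_subset_Icc_self h2⟩
end

section
/- Let N be an h-set, h a horizontal disk in N, and v a vertical disk in N. Then the images |h| and |v| intersect: there exists a point z ∈ N with z ∈ |h| ∩ |v|. -/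
/-- A vertical disk in the h-set `(N, c)`. -/
def IsVerticalDisk (N : Set (ℝ × ℝ)) (c : ℝ × ℝ ≃ₜ ℝ × ℝ) (v : ℝ → ℝ × ℝ) : Prop :=
  ContinuousOn v (Set.Icc (-1 : ℝ) 1) ∧
    ∀ s ∈ Set.Icc (-1 : ℝ) 1, v s ∈ N ∧ (c (v s)).2 = s

/-- in an h-set `N`, every horizontal disk `h` and every vertical
disk `v` intersect: there is `z ∈ N` with `z ∈ |h| ∩ |v|`. -/
theorem horizontal_vertical_disks_intersect
    (N : Set (ℝ × ℝ)) (c : ℝ × ℝ ≃ₜ ℝ × ℝ) (hN : c '' N = unitSquare)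
    (h v : ℝ → ℝ × ℝ)
    (hh : IsHorizontalDisk N c h) (hv : IsVerticalDisk N c v) :
    ∃ z ∈ N, z ∈ h '' Set.Icc (-1 : ℝ) 1 ∧ z ∈ v '' Set.Icc (-1 : ℝ) 1 := by
  obtain ⟨hhc, hhp⟩ := hh
  obtain ⟨hvc, hvp⟩ := hv
  set I : Set ℝ := Set.Icc (-1 : ℝ) 1 with hI
  -- g s = second coordinate of c (h s);  k t = first coordinate of c (v t)
  set g : ℝ → ℝ := fun s => (c (h s)).2 with hg
  set k : ℝ → ℝ := fun t => (c (v t)).1 with hk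
  have hmemH : ∀ s ∈ I, c (h s) ∈ unitSquare := fun s hs => by
    rw [← hN]; exact Set.mem_image_of_mem _ (hhp s hs).1
  have hmemV : ∀ t ∈ I, c (v t) ∈ unitSquare := fun t ht => by
    rw [← hN]; exact Set.mem_image_of_mem _ (hvp t ht).1
  have hgI : ∀ s ∈ I, g s ∈ I := fun s hs => (hmemH s hs).2
  have hkI : ∀ t ∈ I, k t ∈ I := fun t ht => (hmemV t ht).1
  have hgc : ContinuousOn g I :=
    (continuous_snd.comp c.continuous).comp_continuousOn hhc
  have hkc : ContinuousOn k I :=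
    (continuous_fst.comp c.continuous).comp_continuousOn hvc
  -- F s = k (g s) - s
  set F : ℝ → ℝ := fun s => k (g s) - s with hF
  have hFc : ContinuousOn F I :=
    (hkc.comp hgc hgI).sub continuousOn_id
  have h1 : (-1 : ℝ) ∈ I := by constructor <;> norm_num
  have h2 : (1 : ℝ) ∈ I := by constructor <;> norm_num
  have hFneg : F 1 ≤ 0 := by
    have := (hkI _ (hgI 1 h2)).2; simp only [hF]; linarith
  have hFpos : 0 ≤ F (-1) := by
    have := (hkI _ (hgI (-1) h1)).1; simp only [hF]; linarith
  have : (0 : ℝ) ∈ F '' I := by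
    have := intermediate_value_Icc' (by norm_num : (-1 : ℝ) ≤ 1) hFc
    exact this ⟨hFneg, hFpos⟩
  obtain ⟨s, hs, hFs⟩ := this
  have hts : k (g s) = s := by simpa [hF, sub_eq_zero] using hFs
  set t : ℝ := g s with ht
  have htI : t ∈ I := hgI s hs
  have heq : c (h s) = c (v t) := by
    apply Prod.ext
    · rw [(hhp s hs).2, ← hts]
    · rw [(hvp t htI).2]
  have hzeq : h s = v t := c.injective heq
  exact ⟨h s, (hhp s hs).1, ⟨s, hs, rfl⟩, ⟨t, htI, hzeq.symm⟩⟩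
end
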